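/- arXiv:1210.2929 — 2 statements merged into one kernel-verified Lean document; each statement's English description precedes it below -/
import Mathlib

section
/- A point M lies on the circumcircle of triangle ABC (dist O M = R) if and only if the vertices A₁, B₁, C₁ of its pedal triangle are collinear (Simson's theorem). -/
open EuclideanGeometry
noncomputable section
set_option maxHeartbeats 2000000

lemma inner_sub_coords (x y z w : EuclideanSpace ℝ (Fin 2)) :
    (inner ℝ (x - y) (z - w) : ℝ) =
      (x 0 - y 0) * (z 0 - w 0) + (x 1 - y 1) * (z 1 - w 1) := by
  simp [PiLp.inner_apply, Fin.sum_univ_two, RCLike.inner_apply, conj_trivial]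
  ring

lemma dist_sq_coords (x y : EuclideanSpace ℝ (Fin 2)) :
    dist x y ^ 2 = (x 0 - y 0) ^ 2 + (x 1 - y 1) ^ 2 := by
  rw [EuclideanSpace.dist_eq, Real.sq_sqrt (by positivity)]
  simp [Fin.sum_univ_two, Real.dist_eq, sq_abs]

lemma smul_add_comp (c : ℝ) (v w : EuclideanSpace ℝ (Fin 2)) (i : Fin 2) :
    (c • v + w) i = c * v i + w i := rfl

lemma sub_comp (v w : EuclideanSpace ℝ (Fin 2)) (i : Fin 2) : (v - w) i = v i - w i := rfl

lemma sum_sq_ne (x y : EuclideanSpace ℝ (Fin 2)) (h : x ≠ y) :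
    (y 0 - x 0) * (y 0 - x 0) + (y 1 - x 1) * (y 1 - x 1) ≠ 0 := by
  intro hc
  apply h
  have h0 : y 0 - x 0 = 0 := by nlinarith [sq_nonneg (y 0 - x 0), sq_nonneg (y 1 - x 1)]
  have h1 : y 1 - x 1 = 0 := by nlinarith [sq_nonneg (y 0 - x 0), sq_nonneg (y 1 - x 1)]
  ext i
  fin_cases i
  · have := sub_eq_zero.mp h0; exact this.symm
  · have := sub_eq_zero.mp h1; exact this.symm


lemma collinear_iff_cross (p q r : EuclideanSpace ℝ (Fin 2)) :
    Collinear ℝ ({p, q, r} : Set (EuclideanSpace ℝ (Fin 2))) ↔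
      (q 0 - p 0) * (r 1 - p 1) - (q 1 - p 1) * (r 0 - p 0) = 0 := by
  rw [collinear_iff_of_mem (Set.mem_insert p {q, r})]
  constructor
  · rintro ⟨v, hv⟩
    obtain ⟨a, ha⟩ := hv q (by simp)
    obtain ⟨b, hb⟩ := hv r (by simp)
    have e : ∀ (c : ℝ) (i : Fin 2), (c • v +ᵥ p) i = c * v i + p i := fun c i => rfl
    rw [ha, hb, e, e, e, e]
    ring
  · intro h
    rcases eq_or_ne q p with hq | hq
    · refine ⟨r - p, fun x hx => ?_⟩
      simp only [Set.mem_insert_iff, Set.mem_singleton_iff] at hx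
      rcases hx with rfl | rfl | rfl
      · exact ⟨0, by simp⟩
      · exact ⟨0, by simp [hq]⟩
      · exact ⟨1, by simp⟩
    · refine ⟨q - p, fun x hx => ?_⟩
      simp only [Set.mem_insert_iff, Set.mem_singleton_iff] at hx
      have hv0 : q 0 - p 0 ≠ 0 ∨ q 1 - p 1 ≠ 0 := by
        by_contra hc
        push_neg at hc
        apply hq
        ext i
        fin_cases i
        · have := hc.1; simpa [sub_eq_zero] using this
        · have := hc.2; simpa [sub_eq_zero] using this
      rcases hx with rfl | rfl | rfl
      · exact ⟨0, by simp⟩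
      · exact ⟨1, by simp⟩
      · have e : ∀ (c : ℝ) (i : Fin 2), (c • (q - p) +ᵥ p) i = c * (q i - p i) + p i :=
          fun c i => rfl
        rcases hv0 with h0 | h1
        · refine ⟨(x 0 - p 0) / (q 0 - p 0), ?_⟩
          ext i
          fin_cases i
          · rw [e]; simp only [Fin.zero_eta]; field_simp; ring
          · rw [e]; simp only [Fin.mk_one]; field_simp; linear_combination h
        · refine ⟨(x 1 - p 1) / (q 1 - p 1), ?_⟩
          ext i
          fin_cases i
          · rw [e]; simp only [Fin.zero_eta]; field_simp; linear_combination -h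
          · rw [e]; simp only [Fin.mk_one]; field_simp; ring


lemma proj_formula (P Q M : EuclideanSpace ℝ (Fin 2)) (h : P ≠ Q) :
    (EuclideanGeometry.orthogonalProjection (affineSpan ℝ {P, Q}) M :
        EuclideanSpace ℝ (Fin 2)) =
      ((inner ℝ (M - P) (Q - P) : ℝ) / (inner ℝ (Q - P) (Q - P) : ℝ)) • (Q - P) + P := by
  have hQP : Q - P ≠ 0 := sub_ne_zero.mpr (Ne.symm h)
  have hd : (inner ℝ (Q - P) (Q - P) : ℝ) ≠ 0 := inner_self_ne_zero.mpr hQP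
  set t : ℝ := (inner ℝ (M - P) (Q - P) : ℝ) / (inner ℝ (Q - P) (Q - P) : ℝ) with ht
  have hmem : t • (Q - P) + P ∈ affineSpan ℝ ({P, Q} : Set (EuclideanSpace ℝ (Fin 2))) := by
    have := AffineMap.lineMap_mem_affineSpan_pair t P Q
    simpa [AffineMap.lineMap_apply, vsub_eq_sub, vadd_eq_add] using this
  have hperp : t • (Q - P) + P ∈
      AffineSubspace.mk' M (affineSpan ℝ ({P, Q} : Set (EuclideanSpace ℝ (Fin 2)))).directionᗮ := by
    rw [AffineSubspace.mem_mk']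
    rw [direction_affineSpan, vectorSpan_pair]
    rw [Submodule.mem_orthogonal_singleton_iff_inner_right]
    have h1 : (P - Q : EuclideanSpace ℝ (Fin 2)) = -(Q - P) := neg_sub Q P ▸ rfl
    simp only [vsub_eq_sub]; rw [h1, inner_neg_left]
    rw [show t • (Q - P) + P - M = t • (Q - P) - (M - P) by abel]
    rw [inner_sub_right, real_inner_smul_right]
    rw [ht, div_mul_cancel₀ _ hd, real_inner_comm (Q - P) (M - P), sub_self, neg_zero]
  have hsing := EuclideanGeometry.inter_eq_singleton_orthogonalProjection
    (s := affineSpan ℝ ({P, Q} : Set (EuclideanSpace ℝ (Fin 2)))) M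
  have : t • (Q - P) + P ∈ ({(EuclideanGeometry.orthogonalProjection
      (affineSpan ℝ ({P, Q} : Set (EuclideanSpace ℝ (Fin 2)))) M : EuclideanSpace ℝ (Fin 2))} :
      Set (EuclideanSpace ℝ (Fin 2))) := by
    rw [← hsing]
    exact ⟨hmem, hperp⟩
  exact (Set.mem_singleton_iff.mp this).symm

set_option maxHeartbeats 1000000 in
theorem stmt4 (A B C O M A₁ B₁ C₁ : EuclideanSpace ℝ (Fin 2)) (R : ℝ)
    (hABC : AffineIndependent ℝ ![A, B, C])
    (hR : 0 < R) (hOA : dist O A = R) (hOB : dist O B = R) (hOC : dist O C = R)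
    (hA₁ : A₁ = EuclideanGeometry.orthogonalProjection (affineSpan ℝ {B, C}) M)
    (hB₁ : B₁ = EuclideanGeometry.orthogonalProjection (affineSpan ℝ {C, A}) M)
    (hC₁ : C₁ = EuclideanGeometry.orthogonalProjection (affineSpan ℝ {A, B}) M) :
    dist O M = R ↔ Collinear ℝ ({A₁, B₁, C₁} : Set (EuclideanSpace ℝ (Fin 2))) := by
  have hAB : A ≠ B := fun hh => (by decide : (0 : Fin 3) ≠ 1) (hABC.injective (by simp [hh]))
  have hBC : B ≠ C := fun hh => (by decide : (1 : Fin 3) ≠ 2) (hABC.injective (by simp [hh]))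
  have hCA : C ≠ A := fun hh => (by decide : (2 : Fin 3) ≠ 0) (hABC.injective (by simp [hh]))
  have hncol : ¬ Collinear ℝ ({A, B, C} : Set (EuclideanSpace ℝ (Fin 2))) :=
    affineIndependent_iff_not_collinear_set.mp hABC
  have hcs : ((B 0 - A 0) * (C 1 - A 1) - (B 1 - A 1) * (C 0 - A 0)) ≠ 0 := fun hc => hncol ((collinear_iff_cross A B C).mpr hc)
  have ha2 := sum_sq_ne B C hBC
  have hb2 := sum_sq_ne C A hCA
  have hc2 := sum_sq_ne A B hAB
  have ha2d : (((C 0 - A 0) - (B 0 - A 0)) * ((C 0 - A 0) - (B 0 - A 0)) + ((C 1 - A 1) - (B 1 - A 1)) * ((C 1 - A 1) - (B 1 - A 1))) ≠ 0 := fun hz => ha2 (by linear_combination hz)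
  have hb2d : ((C 0 - A 0) * (C 0 - A 0) + (C 1 - A 1) * (C 1 - A 1)) ≠ 0 := fun hz => hb2 (by linear_combination hz)
  have hc2d : ((B 0 - A 0) * (B 0 - A 0) + (B 1 - A 1) * (B 1 - A 1)) ≠ 0 := fun hz => hc2 (by linear_combination hz)
  have h1 : (O 0 - A 0) ^ 2 + (O 1 - A 1) ^ 2 = R ^ 2 := by rw [← dist_sq_coords, hOA]
  have h2 : (O 0 - B 0) ^ 2 + (O 1 - B 1) ^ 2 = R ^ 2 := by rw [← dist_sq_coords, hOB]
  have h3 : (O 0 - C 0) ^ 2 + (O 1 - C 1) ^ 2 = R ^ 2 := by rw [← dist_sq_coords, hOC]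
  have hstepA : ((O 0 - M 0) ^ 2 + (O 1 - M 1) ^ 2 - R ^ 2) * ((B 0 - A 0) * (C 1 - A 1) - (B 1 - A 1) * (C 0 - A 0)) = (((M 0 - A 0) ^ 2 + (M 1 - A 1) ^ 2) * ((B 0 - A 0) * (C 1 - A 1) - (B 1 - A 1) * (C 0 - A 0)) + ((M 1 - A 1) * (C 0 - A 0) - (M 0 - A 0) * (C 1 - A 1)) * ((B 0 - A 0) * (B 0 - A 0) + (B 1 - A 1) * (B 1 - A 1)) + ((B 1 - A 1) * (M 0 - A 0) - (B 0 - A 0) * (M 1 - A 1)) * ((C 0 - A 0) * (C 0 - A 0) + (C 1 - A 1) * (C 1 - A 1))) := by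
    linear_combination (((B 0 - A 0) * (C 1 - A 1) - (B 1 - A 1) * (C 0 - A 0)) + (((M 0 - A 0)) * (A 1 - C 1) - ((M 1 - A 1)) * (A 0 - C 0)) + ((A 0 - B 0) * ((M 1 - A 1)) - (A 1 - B 1) * ((M 0 - A 0)))) * h1 - (((M 0 - A 0)) * (A 1 - C 1) - ((M 1 - A 1)) * (A 0 - C 0)) * h2 - ((A 0 - B 0) * ((M 1 - A 1)) - (A 1 - B 1) * ((M 0 - A 0))) * h3
  have eA0 : A₁ 0 - A 0 = ((((M 0 - A 0) - (B 0 - A 0)) * ((C 0 - A 0) - (B 0 - A 0)) + ((M 1 - A 1) - (B 1 - A 1)) * ((C 1 - A 1) - (B 1 - A 1))) / (((C 0 - A 0) - (B 0 - A 0)) * ((C 0 - A 0) - (B 0 - A 0)) + ((C 1 - A 1) - (B 1 - A 1)) * ((C 1 - A 1) - (B 1 - A 1)))) * ((C 0 - A 0) - (B 0 - A 0)) + (B 0 - A 0) := by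
    rw [hA₁, proj_formula B C M hBC]
    simp only [smul_add_comp, sub_comp, inner_sub_coords]
    field_simp
    ring
  have eA1 : A₁ 1 - A 1 = ((((M 0 - A 0) - (B 0 - A 0)) * ((C 0 - A 0) - (B 0 - A 0)) + ((M 1 - A 1) - (B 1 - A 1)) * ((C 1 - A 1) - (B 1 - A 1))) / (((C 0 - A 0) - (B 0 - A 0)) * ((C 0 - A 0) - (B 0 - A 0)) + ((C 1 - A 1) - (B 1 - A 1)) * ((C 1 - A 1) - (B 1 - A 1)))) * ((C 1 - A 1) - (B 1 - A 1)) + (B 1 - A 1) := by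
    rw [hA₁, proj_formula B C M hBC]
    simp only [smul_add_comp, sub_comp, inner_sub_coords]
    field_simp
    ring
  have eB0 : B₁ 0 - A 0 = ((((M 0 - A 0) - (C 0 - A 0)) * (0 - (C 0 - A 0)) + ((M 1 - A 1) - (C 1 - A 1)) * (0 - (C 1 - A 1))) / ((C 0 - A 0) * (C 0 - A 0) + (C 1 - A 1) * (C 1 - A 1))) * (0 - (C 0 - A 0)) + (C 0 - A 0) := by
    rw [hB₁, proj_formula C A M hCA]
    simp only [smul_add_comp, sub_comp, inner_sub_coords]
    field_simp
    ring
  have eB1 : B₁ 1 - A 1 = ((((M 0 - A 0) - (C 0 - A 0)) * (0 - (C 0 - A 0)) + ((M 1 - A 1) - (C 1 - A 1)) * (0 - (C 1 - A 1))) / ((C 0 - A 0) * (C 0 - A 0) + (C 1 - A 1) * (C 1 - A 1))) * (0 - (C 1 - A 1)) + (C 1 - A 1) := by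
    rw [hB₁, proj_formula C A M hCA]
    simp only [smul_add_comp, sub_comp, inner_sub_coords]
    field_simp
    ring
  have eC0 : C₁ 0 - A 0 = (((M 0 - A 0) * (B 0 - A 0) + (M 1 - A 1) * (B 1 - A 1)) / ((B 0 - A 0) * (B 0 - A 0) + (B 1 - A 1) * (B 1 - A 1))) * (B 0 - A 0) := by
    rw [hC₁, proj_formula A B M hAB]
    simp only [smul_add_comp, sub_comp, inner_sub_coords]
    field_simp
    ring
  have eC1 : C₁ 1 - A 1 = (((M 0 - A 0) * (B 0 - A 0) + (M 1 - A 1) * (B 1 - A 1)) / ((B 0 - A 0) * (B 0 - A 0) + (B 1 - A 1) * (B 1 - A 1))) * (B 1 - A 1) := by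
    rw [hC₁, proj_formula A B M hAB]
    simp only [smul_add_comp, sub_comp, inner_sub_coords]
    field_simp
    ring
  have key : (B₁ 0 - A₁ 0) * (C₁ 1 - A₁ 1) - (B₁ 1 - A₁ 1) * (C₁ 0 - A₁ 0)
      = -(((M 0 - A 0) ^ 2 + (M 1 - A 1) ^ 2) * ((B 0 - A 0) * (C 1 - A 1) - (B 1 - A 1) * (C 0 - A 0)) + ((M 1 - A 1) * (C 0 - A 0) - (M 0 - A 0) * (C 1 - A 1)) * ((B 0 - A 0) * (B 0 - A 0) + (B 1 - A 1) * (B 1 - A 1)) + ((B 1 - A 1) * (M 0 - A 0) - (B 0 - A 0) * (M 1 - A 1)) * ((C 0 - A 0) * (C 0 - A 0) + (C 1 - A 1) * (C 1 - A 1))) * ((B 0 - A 0) * (C 1 - A 1) - (B 1 - A 1) * (C 0 - A 0)) ^ 2 / ((((C 0 - A 0) - (B 0 - A 0)) * ((C 0 - A 0) - (B 0 - A 0)) + ((C 1 - A 1) - (B 1 - A 1)) * ((C 1 - A 1) - (B 1 - A 1))) * ((C 0 - A 0) * (C 0 - A 0) + (C 1 - A 1) * (C 1 - A 1)) * ((B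 0 - A 0) * (B 0 - A 0) + (B 1 - A 1) * (B 1 - A 1))) := by
    rw [show B₁ 0 - A₁ 0 = (B₁ 0 - A 0) - (A₁ 0 - A 0) by ring,
        show C₁ 1 - A₁ 1 = (C₁ 1 - A 1) - (A₁ 1 - A 1) by ring,
        show B₁ 1 - A₁ 1 = (B₁ 1 - A 1) - (A₁ 1 - A 1) by ring,
        show C₁ 0 - A₁ 0 = (C₁ 0 - A 0) - (A₁ 0 - A 0) by ring,
        eA0, eA1, eB0, eB1, eC0, eC1]
    clear eA0 eA1 eB0 eB1 eC0 eC1 hstepA h1 h2 h3 hcs ha2 hb2 hc2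
    revert ha2d hb2d hc2d
    generalize B 0 - A 0 = x0
    generalize B 1 - A 1 = x1
    generalize C 0 - A 0 = y0
    generalize C 1 - A 1 = y1
    generalize M 0 - A 0 = z0
    generalize M 1 - A 1 = z1
    intro ha2d hb2d hc2d
    have hu' : ((z0 - x0) * (y0 - x0) + (z1 - x1) * (y1 - x1)) / ((y0 - x0) * (y0 - x0) + (y1 - x1) * (y1 - x1)) * ((y0 - x0) * (y0 - x0) + (y1 - x1) * (y1 - x1)) = ((z0 - x0) * (y0 - x0) + (z1 - x1) * (y1 - x1)) := div_mul_cancel₀ _ ha2d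
    have hv' : ((z0 - y0) * (0 - y0) + (z1 - y1) * (0 - y1)) / (y0 * y0 + y1 * y1) * (y0 * y0 + y1 * y1) = ((z0 - y0) * (0 - y0) + (z1 - y1) * (0 - y1)) := div_mul_cancel₀ _ hb2d
    have hw' : (z0 * x0 + z1 * x1) / (x0 * x0 + x1 * x1) * (x0 * x0 + x1 * x1) = (z0 * x0 + z1 * x1) := div_mul_cancel₀ _ hc2d
    generalize ((z0 - x0) * (y0 - x0) + (z1 - x1) * (y1 - x1)) / ((y0 - x0) * (y0 - x0) + (y1 - x1) * (y1 - x1)) = u at hu' ⊢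
    generalize ((z0 - y0) * (0 - y0) + (z1 - y1) * (0 - y1)) / (y0 * y0 + y1 * y1) = v at hv' ⊢
    generalize (z0 * x0 + z1 * x1) / (x0 * x0 + x1 * x1) = w at hw' ⊢
    have e1 : ((v * (0 - y0) + y0) - (u * (y0 - x0) + x0)) * (((y0 - x0) * (y0 - x0) + (y1 - x1) * (y1 - x1)) * (y0 * y0 + y1 * y1)) = ((((z0 - y0) * (0 - y0) + (z1 - y1) * (0 - y1)) * (0 - y0) + y0 * (y0 * y0 + y1 * y1)) * ((y0 - x0) * (y0 - x0) + (y1 - x1) * (y1 - x1)) - (((z0 - x0) * (y0 - x0) + (z1 - x1) * (y1 - x1)) * (y0 - x0) + x0 * ((y0 - x0) * (y0 - x0) + (y1 - x1) * (y1 - x1))) * (y0 * y0 + y1 * y1)) := by linear_combination (-(y0 - x0) * (y0 * y0 + y1 * y1)) * hu' + ((0 - y0) * ((y0 - x0) * (y0 - x0) + (y1 - x1) * (y1 - x1))) * hv'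
    have e2 : ((w * x1) - (u * (y1 - x1) + x1)) * (((y0 - x0) * (y0 - x0) + (y1 - x1) * (y1 - x1)) * (x0 * x0 + x1 * x1)) = (((z0 * x0 + z1 * x1) * x1) * ((y0 - x0) * (y0 - x0) + (y1 - x1) * (y1 - x1)) - (((z0 - x0) * (y0 - x0) + (z1 - x1) * (y1 - x1)) * (y1 - x1) + x1 * ((y0 - x0) * (y0 - x0) + (y1 - x1) * (y1 - x1))) * (x0 * x0 + x1 * x1)) := by linear_combination (-(y1 - x1) * (x0 * x0 + x1 * x1)) * hu' + (x1 * ((y0 - x0) * (y0 - x0) + (y1 - x1) * (y1 - x1))) * hw'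
    have e3 : ((v * (0 - y1) + y1) - (u * (y1 - x1) + x1)) * (((y0 - x0) * (y0 - x0) + (y1 - x1) * (y1 - x1)) * (y0 * y0 + y1 * y1)) = ((((z0 - y0) * (0 - y0) + (z1 - y1) * (0 - y1)) * (0 - y1) + y1 * (y0 * y0 + y1 * y1)) * ((y0 - x0) * (y0 - x0) + (y1 - x1) * (y1 - x1)) - (((z0 - x0) * (y0 - x0) + (z1 - x1) * (y1 - x1)) * (y1 - x1) + x1 * ((y0 - x0) * (y0 - x0) + (y1 - x1) * (y1 - x1))) * (y0 * y0 + y1 * y1)) := by linear_combination (-(y1 - x1) * (y0 * y0 + y1 * y1)) * hu' + ((0 - y1) * ((y0 - x0) * (y0 - x0) + (y1 - x1) * (y1 - x1))) * hv'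
    have e4 : ((w * x0) - (u * (y0 - x0) + x0)) * (((y0 - x0) * (y0 - x0) + (y1 - x1) * (y1 - x1)) * (x0 * x0 + x1 * x1)) = (((z0 * x0 + z1 * x1) * x0) * ((y0 - x0) * (y0 - x0) + (y1 - x1) * (y1 - x1)) - (((z0 - x0) * (y0 - x0) + (z1 - x1) * (y1 - x1)) * (y0 - x0) + x0 * ((y0 - x0) * (y0 - x0) + (y1 - x1) * (y1 - x1))) * (x0 * x0 + x1 * x1)) := by linear_combination (-(y0 - x0) * (x0 * x0 + x1 * x1)) * hu' + (x0 * ((y0 - x0) * (y0 - x0) + (y1 - x1) * (y1 - x1))) * hw'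
    rw [eq_div_iff (mul_ne_zero (mul_ne_zero ha2d hb2d) hc2d)]
    apply mul_left_cancel₀ ha2d
    linear_combination (((w * x1) - (u * (y1 - x1) + x1)) * (((y0 - x0) * (y0 - x0) + (y1 - x1) * (y1 - x1)) * (x0 * x0 + x1 * x1))) * e1 + ((((z0 - y0) * (0 - y0) + (z1 - y1) * (0 - y1)) * (0 - y0) + y0 * (y0 * y0 + y1 * y1)) * ((y0 - x0) * (y0 - x0) + (y1 - x1) * (y1 - x1)) - (((z0 - x0) * (y0 - x0) + (z1 - x1) * (y1 - x1)) * (y0 - x0) + x0 * ((y0 - x0) * (y0 - x0) + (y1 - x1) * (y1 - x1))) * (y0 * y0 + y1 * y1)) * e2 - (((w * x0) - (u * (y0 - x0) + x0)) * (((y0 - x0) * (y0 - x0) + (y1 - x1) * (y1 - x1)) * (x0 * x0 + x1 * x1))) * e3 - ((((z0 - y0) * (0 - y0) + (z1 - y1) * (0 - y1)) * (0 - y1) + y1 * (y0 * y0 + y1 * y1)) * ((y0 - x0) * (y0 - x0) + (y1 - x1) * (y1 - x1)) - (((z0 - x0) * (y0 - x0) + (z1 - x1) * (y1 - x1)) *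 (y1 - x1) + x1 * ((y0 - x0) * (y0 - x0) + (y1 - x1) * (y1 - x1))) * (y0 * y0 + y1 * y1)) * e4
  have hkeycs : ((B 0 - A 0) * (C 1 - A 1) - (B 1 - A 1) * (C 0 - A 0)) = ((B 0 - A 0) * (C 1 - A 1) - (B 1 - A 1) * (C 0 - A 0)) := by ring
  rw [collinear_iff_cross]
  constructor
  · intro h
    have hOM2 : (O 0 - M 0) ^ 2 + (O 1 - M 1) ^ 2 = R ^ 2 := by rw [← dist_sq_coords, h]
    have hP0 : (((M 0 - A 0) ^ 2 + (M 1 - A 1) ^ 2) * ((B 0 - A 0) * (C 1 - A 1) - (B 1 - A 1) * (C 0 - A 0)) + ((M 1 - A 1) * (C 0 - A 0) - (M 0 - A 0) * (C 1 - A 1)) * ((B 0 - A 0) * (B 0 - A 0) + (B 1 - A 1) * (B 1 - A 1)) + ((B 1 - A 1) * (M 0 - A 0) - (B 0 - A 0) * (M 1 - A 1)) * ((C 0 - A 0) * (C 0 - A 0) + (C 1 - A 1) * (C 1 - A 1))) = 0 := by rw [← hstepA, hOM2]; ring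
    rw [key, hP0]
    norm_num
  · intro h
    rw [key] at h
    rw [div_eq_zero_iff] at h
    rcases h with h | h
    · have hcs2 : ((B 0 - A 0) * (C 1 - A 1) - (B 1 - A 1) * (C 0 - A 0)) ^ 2 ≠ 0 := pow_ne_zero _ (hkeycs ▸ hcs)
      have hP0 : (((M 0 - A 0) ^ 2 + (M 1 - A 1) ^ 2) * ((B 0 - A 0) * (C 1 - A 1) - (B 1 - A 1) * (C 0 - A 0)) + ((M 1 - A 1) * (C 0 - A 0) - (M 0 - A 0) * (C 1 - A 1)) * ((B 0 - A 0) * (B 0 - A 0) + (B 1 - A 1) * (B 1 - A 1)) + ((B 1 - A 1) * (M 0 - A 0) - (B 0 - A 0) * (M 1 - A 1)) * ((C 0 - A 0) * (C 0 - A 0) + (C 1 - A 1) * (C 1 - A 1))) = 0 := by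
        have hz : (((M 0 - A 0) ^ 2 + (M 1 - A 1) ^ 2) * ((B 0 - A 0) * (C 1 - A 1) - (B 1 - A 1) * (C 0 - A 0)) + ((M 1 - A 1) * (C 0 - A 0) - (M 0 - A 0) * (C 1 - A 1)) * ((B 0 - A 0) * (B 0 - A 0) + (B 1 - A 1) * (B 1 - A 1)) + ((B 1 - A 1) * (M 0 - A 0) - (B 0 - A 0) * (M 1 - A 1)) * ((C 0 - A 0) * (C 0 - A 0) + (C 1 - A 1) * (C 1 - A 1))) * ((B 0 - A 0) * (C 1 - A 1) - (B 1 - A 1) * (C 0 - A 0)) ^ 2 = 0 := by linear_combination -h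
        exact (mul_eq_zero.mp hz).resolve_right hcs2
      have hpow : ((O 0 - M 0) ^ 2 + (O 1 - M 1) ^ 2 - R ^ 2) * ((B 0 - A 0) * (C 1 - A 1) - (B 1 - A 1) * (C 0 - A 0)) = 0 := hstepA.trans hP0
      have hz2 : (O 0 - M 0) ^ 2 + (O 1 - M 1) ^ 2 - R ^ 2 = 0 :=
        (mul_eq_zero.mp hpow).resolve_right hcs
      have hd2 : dist O M ^ 2 = R ^ 2 := by rw [dist_sq_coords]; linarith
      have hfac : (dist O M - R) * (dist O M + R) = 0 := by linear_combination hd2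
      rcases mul_eq_zero.mp hfac with h' | h'
      · linarith
      · have hnn := dist_nonneg (x := O) (y := M); linarith
    · exact absurd h (mul_ne_zero (mul_ne_zero ha2d hb2d) hc2d)
end
end

section
/- Let Ω₁ be a first Brocard point of triangle ABC. Then the pedal triangle A₁B₁C₁ of Ω₁ is similar to triangle BCA: its side lengths satisfy dist B₁ C₁ : dist C₁ A₁ : dist A₁ B₁ = b : c : a, i.e. c · dist B₁ C₁ = b · dist C₁ A₁ and a · dist C₁ A₁ = c · dist A₁ B₁. -/
open EuclideanGeometry
open scoped EuclideanGeometry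

noncomputable section

abbrev E2 := EuclideanSpace ℝ (Fin 2)

lemma brAux_eq_of_sq {X Y : ℝ} (h : X^2 = Y^2) (h2 : 0 ≤ X*Y) : X = Y := by
  have h3 : (X - Y) * (X + Y) = 0 := by linear_combination h
  rcases mul_eq_zero.mp h3 with h4 | h4
  · linarith
  · have hY : Y = 0 := by nlinarith [sq_nonneg Y]
    have hX : X = 0 := by linarith
    rw [hX, hY]

lemma brCore (a2 b2 c2 s x y z w1 w2 w3 : ℝ)
    (ha2 : 0 < a2) (hb2 : 0 < b2) (hc2 : 0 < c2)
    (hnd : s^2 < b2*c2)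
    (haa : a2 = b2 + c2 - 2*s)
    (hI : (x+y+z)*w1 = c2*y + s*z)
    (hII : (x+y+z)*w2 = (c2-s)*x + a2*z)
    (hIII : (x+y+z)*w3 = b2*x + (b2-s)*y)
    (hx : x ≠ 0)
    (H1 : w1*x = w2*z) (H2 : w2*y = w3*x) :
    b2*x = a2*z ∧ c2*y = b2*x := by
  subst haa
  have hx2 : 0 < x^2 := lt_of_le_of_ne (sq_nonneg x) (Ne.symm (pow_ne_zero 2 hx))
  have hP1 : c2*x*y + 2*s*x*z - c2*x*z - (b2+c2-2*s)*z^2 = 0 := by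
    linear_combination (x+y+z)*H1 - x*hI + z*hII
  have hP2 : (c2-b2)*x*y + (b2+c2-2*s)*y*z - b2*x^2 = 0 := by
    linear_combination (x+y+z)*H2 - y*hII + x*hIII
  have key : ((b2+c2-2*s)*z - b2*x) * ((b2+c2-2*s)*z^2 + 2*(c2-s)*x*z + c2*x^2) = 0 := by
    linear_combination c2*x*hP2 - ((c2-b2)*x + (b2+c2-2*s)*z)*hP1
  have hQpos : 0 < (b2+c2-2*s) * ((b2+c2-2*s)*z^2 + 2*(c2-s)*x*z + c2*x^2) := by
    nlinarith [sq_nonneg ((b2+c2-2*s)*z + (c2-s)*x), hx2, hnd]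
  have hQ : 0 < (b2+c2-2*s)*z^2 + 2*(c2-s)*x*z + c2*x^2 := by nlinarith [hQpos, ha2]
  have G1 : b2*x = (b2+c2-2*s)*z := by
    rcases mul_eq_zero.mp key with h | h
    · linarith
    · exact absurd h hQ.ne'
  refine ⟨G1, ?_⟩
  have h5 : x*(c2*y - b2*x) = 0 := by linear_combination hP2 + y*G1
  rcases mul_eq_zero.mp h5 with h | h
  · exact absurd h hx
  · linarith



lemma brAux_dist_sq (X Y : E2) : dist X Y ^ 2 = (X 0 - Y 0)^2 + (X 1 - Y 1)^2 := by
  rw [EuclideanSpace.dist_eq, Real.sq_sqrt (by positivity)]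
  simp [Fin.sum_univ_two, Real.dist_eq, sq_abs]

lemma brAux_inner (u v : E2) : (inner ℝ u v : ℝ) = u 0 * v 0 + u 1 * v 1 := by
  simp [PiLp.inner_apply, RCLike.inner_apply, Fin.sum_univ_two]
  ring

lemma brAux_proj (U W P : E2) (h : U ≠ W) :
    ((EuclideanGeometry.orthogonalProjection (affineSpan ℝ {U, W}) P : E2)) =
      ((inner ℝ (P - U) (W - U) : ℝ) / (‖W - U‖^2)) • (W - U) + U := by
  have hWU : (W - U : E2) ≠ 0 := sub_ne_zero.mpr (Ne.symm h)
  have hn : ‖(W - U : E2)‖^2 ≠ 0 := pow_ne_zero 2 (norm_ne_zero_iff.mpr hWU)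
  set t : ℝ := (inner ℝ (P - U) (W - U) : ℝ) / (‖W - U‖^2) with ht
  have hmem : t • (W - U) + U ∈ (affineSpan ℝ ({U, W} : Set E2) : Set E2) := by
    have := smul_vsub_vadd_mem_affineSpan_pair t U W
    simpa [vsub_eq_sub, vadd_eq_add] using this
  have horth : t • (W - U) + U ∈ AffineSubspace.mk' P (affineSpan ℝ ({U, W} : Set E2)).directionᗮ := by
    rw [AffineSubspace.mem_mk', direction_affineSpan, vectorSpan_pair]
    rw [Submodule.mem_orthogonal_singleton_iff_inner_right]
    have : (t • (W - U) + U -ᵥ P : E2) = t • (W - U) - (P - U) := by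
      rw [vsub_eq_sub]; abel
    rw [this]
    rw [show (U -ᵥ W : E2) = -(W - U) by rw [vsub_eq_sub, neg_sub]]
    rw [inner_neg_left, inner_sub_right, real_inner_smul_right, real_inner_self_eq_norm_sq]
    rw [ht, div_mul_cancel₀ _ hn]
    simp only [neg_sub, sub_eq_zero]
    exact real_inner_comm _ _
  have hk := EuclideanGeometry.inter_eq_singleton_orthogonalProjection
    (s := affineSpan ℝ ({U, W} : Set E2)) P
  have hFmem : (t • (W - U) + U : E2) ∈ ((affineSpan ℝ ({U, W} : Set E2) : Set E2) ∩
      (AffineSubspace.mk' P (affineSpan ℝ ({U, W} : Set E2)).directionᗮ : Set E2)) := ⟨hmem, horth⟩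
  rw [hk] at hFmem
  exact (Set.mem_singleton_iff.mp hFmem).symm

lemma brAux_ext {u v : E2} (h0 : u 0 = v 0) (h1 : u 1 = v 1) : u = v := by
  ext i
  fin_cases i
  · exact h0
  · exact h1

lemma brAux_nd {A B C : E2} (hABC : AffineIndependent ℝ ![A, B, C]) :
    (B 0 - A 0) * (C 1 - A 1) - (B 1 - A 1) * (C 0 - A 0) ≠ 0 := by
  intro hd
  have hAB : A ≠ B := by
    have := hABC.injective.ne (show (0 : Fin 3) ≠ 1 by decide)
    simpa using this
  have hcol : Collinear ℝ ({A, B, C} : Set E2) := by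
    rw [collinear_iff_of_mem (Set.mem_insert A {B, C})]
    refine ⟨B - A, ?_⟩
    have hf : (B 0 - A 0) ≠ 0 ∨ (B 1 - A 1) ≠ 0 := by
      by_contra hcon
      push_neg at hcon
      exact hAB (brAux_ext (by linarith [hcon.1]) (by linarith [hcon.2]))
    have happ : ∀ (r : ℝ) (i : Fin 2), (r • (B - A) +ᵥ A : E2) i = r * (B i - A i) + A i := by
      intro r i
      simp [vadd_eq_add, PiLp.add_apply, PiLp.smul_apply, PiLp.sub_apply]
    intro q hq
    rcases hq with rfl | rfl | rfl
    · exact ⟨0, (brAux_ext (by rw [happ]; ring) (by rw [happ]; ring))⟩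
    · exact ⟨1, (brAux_ext (by rw [happ]; ring) (by rw [happ]; ring))⟩
    · rcases hf with hf | hf
      · refine ⟨(q 0 - A 0)/(B 0 - A 0), brAux_ext ?_ ?_⟩
        · rw [happ]; field_simp; ring
        · rw [happ]; field_simp; linear_combination hd
      · refine ⟨(q 1 - A 1)/(B 1 - A 1), brAux_ext ?_ ?_⟩
        · rw [happ]; field_simp; linear_combination -hd
        · rw [happ]; field_simp; ring
  exact (affineIndependent_iff_not_collinear_set.mp hABC) hcol

lemma brAux_mul_nonneg {w1 w2 P Q : ℝ} (h : w1 * Q = w2 * P) (hP : 0 < P) (hQ : 0 < Q) :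
    0 ≤ w1 * w2 := by
  have key0 : (w1*w2) * (Q*P) = (w2*P)^2 := by linear_combination (w2*P) * h
  nlinarith [key0, mul_pos hQ hP, sq_nonneg (w2*P)]

set_option maxHeartbeats 1000000 in
theorem stmt7 (A B C O Ω₁ A₁ B₁ C₁ : EuclideanSpace ℝ (Fin 2)) (R a b c : ℝ)
    (hABC : AffineIndependent ℝ ![A, B, C])
    (hR : 0 < R) (hOA : dist O A = R) (hOB : dist O B = R) (hOC : dist O C = R)
    (ha : a = dist B C) (hb : b = dist C A) (hc : c = dist A B)
    (hΩ : Ω₁ ∈ interior (convexHull ℝ ({A, B, C} : Set (EuclideanSpace ℝ (Fin 2)))))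
    (hBr₁ : ∠ Ω₁ A B = ∠ Ω₁ B C) (hBr₂ : ∠ Ω₁ B C = ∠ Ω₁ C A)
    (hA₁ : A₁ = EuclideanGeometry.orthogonalProjection (affineSpan ℝ {B, C}) Ω₁)
    (hB₁ : B₁ = EuclideanGeometry.orthogonalProjection (affineSpan ℝ {C, A}) Ω₁)
    (hC₁ : C₁ = EuclideanGeometry.orthogonalProjection (affineSpan ℝ {A, B}) Ω₁) :
    c * dist B₁ C₁ = b * dist C₁ A₁ ∧ a * dist C₁ A₁ = c * dist A₁ B₁ := by
  have hAB : A ≠ B := by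
    simpa using hABC.injective.ne (show (0 : Fin 3) ≠ 1 by decide)
  have hAC : A ≠ C := by
    simpa using hABC.injective.ne (show (0 : Fin 3) ≠ 2 by decide)
  have hBC : B ≠ C := by
    simpa using hABC.injective.ne (show (1 : Fin 3) ≠ 2 by decide)
  have hND := brAux_nd hABC
  obtain ⟨α, β, γ, hα, hβ, hγ, hsum, hcomp⟩ : ∃ α β γ : ℝ, 0 < α ∧ 0 < β ∧ 0 < γ ∧
      α + β + γ = 1 ∧ (∀ i, Ω₁ i = α * A i + β * B i + γ * C i) := by
    have hspan : affineSpan ℝ (Set.range ![A, B, C]) = ⊤ := by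
      rw [hABC.affineSpan_eq_top_iff_card_eq_finrank_add_one]
      simp [finrank_euclideanSpace_fin]
    let bas : AffineBasis (Fin 3) ℝ E2 := ⟨![A, B, C], hABC, hspan⟩
    have hco : ⇑bas = ![A, B, C] := rfl
    have hrange : Set.range ⇑bas = ({A, B, C} : Set E2) := by
      rw [hco]
      ext w
      constructor
      · rintro ⟨i, rfl⟩
        fin_cases i <;> simp
      · rintro (rfl | rfl | rfl)
        exacts [⟨0, rfl⟩, ⟨1, rfl⟩, ⟨2, rfl⟩]
    rw [← hrange, bas.interior_convexHull] at hΩ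
    refine ⟨bas.coord 0 Ω₁, bas.coord 1 Ω₁, bas.coord 2 Ω₁, hΩ 0, hΩ 1, hΩ 2, ?_, ?_⟩
    · have := bas.sum_coord_apply_eq_one Ω₁
      rwa [Fin.sum_univ_three] at this
    · have hsum := bas.sum_coord_apply_eq_one Ω₁
      have h := bas.affineCombination_coord_eq_self Ω₁
      rw [Finset.affineCombination_eq_linear_combination _ _ _ hsum] at h
      rw [Fin.sum_univ_three, hco] at h
      intro i
      have := congrArg (fun v : E2 => v i) h
      simp only [Matrix.cons_val_zero, Matrix.cons_val_one, Matrix.head_cons] at this ⊢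
      rw [← this]
      simp [PiLp.add_apply, PiLp.smul_apply]
  -- translated coordinates
  obtain ⟨u0, hu0⟩ : ∃ t : ℝ, t = B 0 - A 0 := ⟨_, rfl⟩
  obtain ⟨u1, hu1⟩ : ∃ t : ℝ, t = B 1 - A 1 := ⟨_, rfl⟩
  obtain ⟨v0, hv0⟩ : ∃ t : ℝ, t = C 0 - A 0 := ⟨_, rfl⟩
  obtain ⟨v1, hv1⟩ : ∃ t : ℝ, t = C 1 - A 1 := ⟨_, rfl⟩
  obtain ⟨n0, hn0⟩ : ∃ t : ℝ, t = Ω₁ 0 - A 0 := ⟨_, rfl⟩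
  obtain ⟨n1, hn1⟩ : ∃ t : ℝ, t = Ω₁ 1 - A 1 := ⟨_, rfl⟩
  -- scalar quantities
  obtain ⟨Δ, hΔdef⟩ : ∃ t : ℝ, t = u0 * v1 - u1 * v0 := ⟨_, rfl⟩
  obtain ⟨x, hxdef⟩ : ∃ t : ℝ, t = (v0 - u0) * (n1 - u1) - (v1 - u1) * (n0 - u0) := ⟨_, rfl⟩
  obtain ⟨y, hydef⟩ : ∃ t : ℝ, t = n0 * v1 - n1 * v0 := ⟨_, rfl⟩
  obtain ⟨z, hzdef⟩ : ∃ t : ℝ, t = u0 * n1 - u1 * n0 := ⟨_, rfl⟩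
  obtain ⟨w1, hw1def⟩ : ∃ t : ℝ, t = n0 * u0 + n1 * u1 := ⟨_, rfl⟩
  obtain ⟨w2, hw2def⟩ : ∃ t : ℝ, t = (n0 - u0) * (v0 - u0) + (n1 - u1) * (v1 - u1) := ⟨_, rfl⟩
  obtain ⟨w3, hw3def⟩ : ∃ t : ℝ, t = (n0 - v0) * (-v0) + (n1 - v1) * (-v1) := ⟨_, rfl⟩
  obtain ⟨sP, hsPdef⟩ : ∃ t : ℝ, t = u0 * v0 + u1 * v1 := ⟨_, rfl⟩
  obtain ⟨a2, ha2def⟩ : ∃ t : ℝ, t = (v0 - u0)^2 + (v1 - u1)^2 := ⟨_, rfl⟩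
  obtain ⟨b2, hb2def⟩ : ∃ t : ℝ, t = v0^2 + v1^2 := ⟨_, rfl⟩
  obtain ⟨c2, hc2def⟩ : ∃ t : ℝ, t = u0^2 + u1^2 := ⟨_, rfl⟩
  obtain ⟨p2, hp2def⟩ : ∃ t : ℝ, t = n0^2 + n1^2 := ⟨_, rfl⟩
  obtain ⟨q2, hq2def⟩ : ∃ t : ℝ, t = (n0 - u0)^2 + (n1 - u1)^2 := ⟨_, rfl⟩
  obtain ⟨r2, hr2def⟩ : ∃ t : ℝ, t = (n0 - v0)^2 + (n1 - v1)^2 := ⟨_, rfl⟩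
  have hNDΔ : Δ ≠ 0 := by
    rw [hΔdef, hu0, hu1, hv0, hv1]
    exact hND
  -- barycentric signs
  have hΔx : x = α * Δ := by
    rw [hxdef, hΔdef, hu0, hu1, hv0, hv1, hn0, hn1, hcomp 0, hcomp 1]
    linear_combination ((C 0 - B 0) * B 1 - (C 1 - B 1) * B 0) * hsum
  have hΔy : y = β * Δ := by
    rw [hydef, hΔdef, hu0, hu1, hv0, hv1, hn0, hn1, hcomp 0, hcomp 1]
    linear_combination (A 0 * (C 1 - A 1) - A 1 * (C 0 - A 0)) * hsum
  have hΔz : z = γ * Δ := by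
    rw [hzdef, hΔdef, hu0, hu1, hv0, hv1, hn0, hn1, hcomp 0, hcomp 1]
    linear_combination ((B 0 - A 0) * A 1 - (B 1 - A 1) * A 0) * hsum
  have hΔsq : 0 < Δ^2 := lt_of_le_of_ne (sq_nonneg Δ) (Ne.symm (pow_ne_zero 2 hNDΔ))
  have hxz : 0 < x * z := by
    rw [hΔx, hΔz]
    have hre : α * Δ * (γ * Δ) = (α * γ) * Δ^2 := by ring
    rw [hre]
    exact mul_pos (mul_pos hα hγ) hΔsq
  have hxy : 0 < x * y := by
    rw [hΔx, hΔy]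
    have hre : α * Δ * (β * Δ) = (α * β) * Δ^2 := by ring
    rw [hre]
    exact mul_pos (mul_pos hα hβ) hΔsq
  have hxne : x ≠ 0 := by rw [hΔx]; exact mul_ne_zero hα.ne' hNDΔ
  have hyne : y ≠ 0 := by rw [hΔy]; exact mul_ne_zero hβ.ne' hNDΔ
  have hzne : z ≠ 0 := by rw [hΔz]; exact mul_ne_zero hγ.ne' hNDΔ
  -- Ω₁ distinct from the vertices
  have hΩA : Ω₁ ≠ A := by
    intro h
    exact hzne (by rw [hzdef, hu0, hu1, hn0, hn1, h]; ring)
  have hΩB : Ω₁ ≠ B := by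
    intro h
    exact hxne (by rw [hxdef, hu0, hu1, hv0, hv1, hn0, hn1, h]; ring)
  have hΩC : Ω₁ ≠ C := by
    intro h
    exact hyne (by rw [hydef, hv0, hv1, hn0, hn1, h]; ring)
  have hdΩA : 0 < dist Ω₁ A := dist_pos.mpr hΩA
  have hdΩB : 0 < dist Ω₁ B := dist_pos.mpr hΩB
  have hdΩC : 0 < dist Ω₁ C := dist_pos.mpr hΩC
  have hdBA : 0 < dist B A := dist_pos.mpr (Ne.symm hAB)
  have hdCB : 0 < dist C B := dist_pos.mpr (Ne.symm hBC)
  have hdAC : 0 < dist A C := dist_pos.mpr hAC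
  -- inner products in coordinates
  have hi1 : (inner ℝ (Ω₁ - A) (B - A) : ℝ) = w1 := by
    rw [brAux_inner, hw1def, hn0, hn1, hu0, hu1]
    simp only [PiLp.sub_apply]
    try ring
  have hi2 : (inner ℝ (Ω₁ - B) (C - B) : ℝ) = w2 := by
    rw [brAux_inner, hw2def, hn0, hn1, hu0, hu1, hv0, hv1]
    simp only [PiLp.sub_apply]
    try ring
  have hi3 : (inner ℝ (Ω₁ - C) (A - C) : ℝ) = w3 := by
    rw [brAux_inner, hw3def, hn0, hn1, hv0, hv1]
    simp only [PiLp.sub_apply]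
    try ring
  -- the two angle conditions
  have h1 : w1 * (dist Ω₁ B * dist C B) = w2 * (dist Ω₁ A * dist B A) := by
    have hcc := congrArg Real.cos hBr₁
    simp only [EuclideanGeometry.angle] at hcc
    rw [InnerProductGeometry.cos_angle, InnerProductGeometry.cos_angle] at hcc
    simp only [vsub_eq_sub, ← dist_eq_norm] at hcc
    rw [div_eq_div_iff (ne_of_gt (mul_pos hdΩA hdBA)) (ne_of_gt (mul_pos hdΩB hdCB))] at hcc
    rw [hi1, hi2] at hcc
    exact hcc
  have h2 : w2 * (dist Ω₁ C * dist A C) = w3 * (dist Ω₁ B * dist C B) := by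
    have hcc := congrArg Real.cos hBr₂
    simp only [EuclideanGeometry.angle] at hcc
    rw [InnerProductGeometry.cos_angle, InnerProductGeometry.cos_angle] at hcc
    simp only [vsub_eq_sub, ← dist_eq_norm] at hcc
    rw [div_eq_div_iff (ne_of_gt (mul_pos hdΩB hdCB)) (ne_of_gt (mul_pos hdΩC hdAC))] at hcc
    rw [hi2, hi3] at hcc
    exact hcc
  -- squared distances in coordinates
  have hpcoord : dist Ω₁ A ^ 2 = p2 := by
    rw [brAux_dist_sq, hp2def, hn0, hn1]
  have hqcoord : dist Ω₁ B ^ 2 = q2 := by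
    rw [brAux_dist_sq, hq2def, hn0, hn1, hu0, hu1]; try ring
  have hrcoord : dist Ω₁ C ^ 2 = r2 := by
    rw [brAux_dist_sq, hr2def, hn0, hn1, hv0, hv1]; try ring
  have hacoord : dist C B ^ 2 = a2 := by
    rw [brAux_dist_sq, ha2def, hu0, hu1, hv0, hv1]; try ring
  have hbcoord : dist A C ^ 2 = b2 := by
    rw [brAux_dist_sq, hb2def, hv0, hv1]; try ring
  have hccoord : dist B A ^ 2 = c2 := by
    rw [brAux_dist_sq, hc2def, hu0, hu1]; try ring
  -- Lagrange identities
  have hpc : p2 * c2 = w1^2 + z^2 := by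
    rw [hp2def, hc2def, hw1def, hzdef]; try ring
  have hqa : q2 * a2 = w2^2 + x^2 := by
    rw [hq2def, ha2def, hw2def, hxdef]; try ring
  have hrb : r2 * b2 = w3^2 + y^2 := by
    rw [hr2def, hb2def, hw3def, hydef]; try ring
  -- H1 : w1*x = w2*z
  have hsq1 : (w1*x)^2 = (w2*z)^2 := by
    have h' := congrArg (fun t : ℝ => t^2) h1
    simp only [mul_pow] at h'
    rw [hqcoord, hacoord, hpcoord, hccoord] at h'
    have h'' : w1^2 * (w2^2 + x^2) = w2^2 * (w1^2 + z^2) := by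
      rw [← hqa, ← hpc]; linear_combination h'
    linear_combination h''
  have hw12 : 0 ≤ w1 * w2 :=
    brAux_mul_nonneg h1 (mul_pos hdΩA hdBA) (mul_pos hdΩB hdCB)
  have H1 : w1 * x = w2 * z := by
    apply brAux_eq_of_sq hsq1
    have hrr : (w1*x)*(w2*z) = (w1*w2)*(x*z) := by ring
    rw [hrr]
    exact mul_nonneg hw12 hxz.le
  -- H2 : w2*y = w3*x
  have hsq2 : (w2*y)^2 = (w3*x)^2 := by
    have h' := congrArg (fun t : ℝ => t^2) h2
    simp only [mul_pow] at h'
    rw [hrcoord, hbcoord, hqcoord, hacoord] at h'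
    have h'' : w2^2 * (w3^2 + y^2) = w3^2 * (w2^2 + x^2) := by
      rw [← hrb, ← hqa]; linear_combination h'
    linear_combination h''
  have hw23 : 0 ≤ w2 * w3 :=
    brAux_mul_nonneg h2 (mul_pos hdΩB hdCB) (mul_pos hdΩC hdAC)
  have H2 : w2 * y = w3 * x := by
    apply brAux_eq_of_sq hsq2
    have hrr : (w2*y)*(w3*x) = (w2*w3)*(x*y) := by ring
    rw [hrr]
    exact mul_nonneg hw23 hxy.le
  -- positivity of squared sides
  have ha2pos : 0 < a2 := by rw [← hacoord]; exact pow_pos hdCB 2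
  have hb2pos : 0 < b2 := by rw [← hbcoord]; exact pow_pos hdAC 2
  have hc2pos : 0 < c2 := by rw [← hccoord]; exact pow_pos hdBA 2
  have hndlt : sP^2 < b2*c2 := by
    have hid : Δ^2 + sP^2 = b2*c2 := by
      rw [hΔdef, hsPdef, hb2def, hc2def]; try ring
    linarith [hΔsq]
  obtain ⟨G1, G2⟩ := brCore a2 b2 c2 sP x y z w1 w2 w3 ha2pos hb2pos hc2pos hndlt
    (by rw [ha2def, hb2def, hc2def, hsPdef]; ring)
    (by rw [hxdef, hydef, hzdef, hw1def, hc2def, hsPdef]; ring)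
    (by rw [hxdef, hydef, hzdef, hw2def, ha2def, hc2def, hsPdef]; ring)
    (by rw [hxdef, hydef, hzdef, hw3def, hb2def, hsPdef]; ring)
    hxne H1 H2
  -- pedal feet in coordinates
  have hB1e : B₁ = ((w3 : ℝ)/b2) • (A - C) + C := by
    rw [hB₁, brAux_proj C A Ω₁ (Ne.symm hAC)]
    have hnb : ‖(A - C : E2)‖^2 = b2 := by
      rw [← dist_eq_norm]; exact hbcoord
    rw [hi3, hnb]
  have hC1e : C₁ = ((w1 : ℝ)/c2) • (B - A) + A := by
    rw [hC₁, brAux_proj A B Ω₁ hAB]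
    have hnc : ‖(B - A : E2)‖^2 = c2 := by
      rw [← dist_eq_norm]; exact hccoord
    rw [hi1, hnc]
  have hA1e : A₁ = ((w2 : ℝ)/a2) • (C - B) + B := by
    rw [hA₁, brAux_proj B C Ω₁ hBC]
    have hna : ‖(C - B : E2)‖^2 = a2 := by
      rw [← dist_eq_norm]; exact hacoord
    rw [hi2, hna]
  have happly : ∀ (t : ℝ) (U W : E2) (i : Fin 2), ((t • (U - W) + W : E2)) i = t * (U i - W i) + W i := by
    intro t U W i
    simp [PiLp.add_apply, PiLp.smul_apply, PiLp.sub_apply]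
  have hB10 : B₁ 0 = w3/b2 * (A 0 - C 0) + C 0 := by rw [hB1e]; exact happly _ _ _ 0
  have hB11 : B₁ 1 = w3/b2 * (A 1 - C 1) + C 1 := by rw [hB1e]; exact happly _ _ _ 1
  have hC10 : C₁ 0 = w1/c2 * (B 0 - A 0) + A 0 := by rw [hC1e]; exact happly _ _ _ 0
  have hC11 : C₁ 1 = w1/c2 * (B 1 - A 1) + A 1 := by rw [hC1e]; exact happly _ _ _ 1
  have hA10 : A₁ 0 = w2/a2 * (C 0 - B 0) + B 0 := by rw [hA1e]; exact happly _ _ _ 0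
  have hA11 : A₁ 1 = w2/a2 * (C 1 - B 1) + B 1 := by rw [hA1e]; exact happly _ _ _ 1
  -- cleared component identities
  have hBC0 : (B₁ 0 - C₁ 0) * (b2*c2) = b2*c2*v0 - c2*w3*v0 - b2*w1*u0 := by
    rw [hB10, hC10, hu0, hv0]
    field_simp
    ring
  have hBC1 : (B₁ 1 - C₁ 1) * (b2*c2) = b2*c2*v1 - c2*w3*v1 - b2*w1*u1 := by
    rw [hB11, hC11, hu1, hv1]
    field_simp
    ring
  have hCA0 : (C₁ 0 - A₁ 0) * (c2*a2) = a2*w1*u0 - c2*w2*(v0-u0) - c2*a2*u0 := by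
    rw [hC10, hA10, hu0, hv0]
    field_simp
    ring
  have hCA1 : (C₁ 1 - A₁ 1) * (c2*a2) = a2*w1*u1 - c2*w2*(v1-u1) - c2*a2*u1 := by
    rw [hC11, hA11, hu1, hv1]
    field_simp
    ring
  have hAB0 : (A₁ 0 - B₁ 0) * (a2*b2) = b2*w2*(v0-u0) + a2*b2*(u0-v0) + a2*w3*v0 := by
    rw [hA10, hB10, hu0, hv0]
    field_simp
    ring
  have hAB1 : (A₁ 1 - B₁ 1) * (a2*b2) = b2*w2*(v1-u1) + a2*b2*(u1-v1) + a2*w3*v1 := by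
    rw [hA11, hB11, hu1, hv1]
    field_simp
    ring
  have hb2c2ne : (b2*c2) ≠ 0 := (mul_pos hb2pos hc2pos).ne'
  have hc2a2ne : (c2*a2) ≠ 0 := (mul_pos hc2pos ha2pos).ne'
  have ha2b2ne : (a2*b2) ≠ 0 := (mul_pos ha2pos hb2pos).ne'
  -- pedal distance identities
  have hd1 : dist B₁ C₁ ^ 2 * (b2*c2) = p2 * Δ^2 := by
    have hbig : (b2*c2*v0 - c2*w3*v0 - b2*w1*u0)^2 + (b2*c2*v1 - c2*w3*v1 - b2*w1*u1)^2
        = p2*Δ^2*(b2*c2) := by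
      rw [hb2def, hc2def, hw3def, hw1def, hp2def, hΔdef]; try ring
    have hsqd : dist B₁ C₁ ^ 2 * (b2*c2) * (b2*c2) = p2 * Δ^2 * (b2*c2) := by
      rw [brAux_dist_sq]
      linear_combination ((B₁ 0 - C₁ 0)*(b2*c2) + (b2*c2*v0 - c2*w3*v0 - b2*w1*u0)) * hBC0 +
        ((B₁ 1 - C₁ 1)*(b2*c2) + (b2*c2*v1 - c2*w3*v1 - b2*w1*u1)) * hBC1 + hbig
    exact mul_right_cancel₀ hb2c2ne hsqd
  have hd2 : dist C₁ A₁ ^ 2 * (c2*a2) = q2 * Δ^2 := by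
    have hbig : (a2*w1*u0 - c2*w2*(v0-u0) - c2*a2*u0)^2 + (a2*w1*u1 - c2*w2*(v1-u1) - c2*a2*u1)^2
        = q2*Δ^2*(c2*a2) := by
      rw [ha2def, hc2def, hw2def, hw1def, hq2def, hΔdef]; try ring
    have hsqd : dist C₁ A₁ ^ 2 * (c2*a2) * (c2*a2) = q2 * Δ^2 * (c2*a2) := by
      rw [brAux_dist_sq]
      linear_combination ((C₁ 0 - A₁ 0)*(c2*a2) + (a2*w1*u0 - c2*w2*(v0-u0) - c2*a2*u0)) * hCA0 +
        ((C₁ 1 - A₁ 1)*(c2*a2) + (a2*w1*u1 - c2*w2*(v1-u1) - c2*a2*u1)) * hCA1 + hbig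
    exact mul_right_cancel₀ hc2a2ne hsqd
  have hd3 : dist A₁ B₁ ^ 2 * (a2*b2) = r2 * Δ^2 := by
    have hbig : (b2*w2*(v0-u0) + a2*b2*(u0-v0) + a2*w3*v0)^2 + (b2*w2*(v1-u1) + a2*b2*(u1-v1) + a2*w3*v1)^2
        = r2*Δ^2*(a2*b2) := by
      rw [ha2def, hb2def, hw2def, hw3def, hr2def, hΔdef]; try ring
    have hsqd : dist A₁ B₁ ^ 2 * (a2*b2) * (a2*b2) = r2 * Δ^2 * (a2*b2) := by
      rw [brAux_dist_sq]
      linear_combination ((A₁ 0 - B₁ 0)*(a2*b2) + (b2*w2*(v0-u0) + a2*b2*(u0-v0) + a2*w3*v0)) * hAB0 +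
        ((A₁ 1 - B₁ 1)*(a2*b2) + (b2*w2*(v1-u1) + a2*b2*(u1-v1) + a2*w3*v1)) * hAB1 + hbig
    exact mul_right_cancel₀ ha2b2ne hsqd
  -- key squared relations
  have e1 : b2^2 * x^2 = a2^2 * z^2 := by linear_combination (b2*x + a2*z) * G1
  have e2 : (b2^2 * w2^2) * z^2 = (a2^2 * w1^2) * z^2 := by
    linear_combination (-(b2^2)*(w1*x + w2*z)) * H1 + (w1^2*(b2*x + a2*z)) * G1
  have e2' : b2^2 * w2^2 = a2^2 * w1^2 := mul_right_cancel₀ (pow_ne_zero 2 hzne) e2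
  have hkey1 : a2^2 * (w1^2 + z^2) = b2^2 * (w2^2 + x^2) := by
    linear_combination - e2' - e1
  have e3 : c2^2 * y^2 = b2^2 * x^2 := by linear_combination (c2*y + b2*x) * G2
  have e4 : (c2^2 * w3^2) * x^2 = (b2^2 * w2^2) * x^2 := by
    linear_combination (-(c2^2)*(w2*y + w3*x)) * H2 + (w2^2*(c2*y + b2*x)) * G2
  have e4' : c2^2 * w3^2 = b2^2 * w2^2 := mul_right_cancel₀ (pow_ne_zero 2 hxne) e4
  have hkey2 : b2^2 * (w2^2 + x^2) = c2^2 * (w3^2 + y^2) := by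
    linear_combination - e4' - e3
  -- final assembly
  have habcne : (a2*b2*c2) ≠ 0 := (mul_pos (mul_pos ha2pos hb2pos) hc2pos).ne'
  have h8 : a2 * (p2 * c2) = b2^2 * q2 := by
    have h7 : a2 * (a2 * (p2 * c2)) = a2 * (b2^2 * q2) := by
      linear_combination a2^2 * hpc + hkey1 - b2^2 * hqa
    exact mul_left_cancel₀ ha2pos.ne' h7
  have hfin1 : c2 * dist B₁ C₁ ^ 2 = b2 * dist C₁ A₁ ^ 2 := by
    have h9 : (c2 * dist B₁ C₁ ^ 2) * (a2*b2*c2) = (b2 * dist C₁ A₁ ^ 2) * (a2*b2*c2) := by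
      linear_combination (c2*a2) * hd1 - b2^2 * hd2 + Δ^2 * h8
    exact mul_right_cancel₀ habcne h9
  have h8' : a2 * b2 * q2 = c2^2 * r2 := by
    have h7' : b2 * (a2 * b2 * q2) = b2 * (c2^2 * r2) := by
      linear_combination b2^2 * hqa + hkey2 - c2^2 * hrb
    exact mul_left_cancel₀ hb2pos.ne' h7'
  have hfin2 : a2 * dist C₁ A₁ ^ 2 = c2 * dist A₁ B₁ ^ 2 := by
    have h9' : (a2 * dist C₁ A₁ ^ 2) * (a2*b2*c2) = (c2 * dist A₁ B₁ ^ 2) * (a2*b2*c2) := by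
      linear_combination (a2*b2) * hd2 - c2^2 * hd3 + Δ^2 * h8'
    exact mul_right_cancel₀ habcne h9'
  have hasq : a^2 = a2 := by
    rw [ha, brAux_dist_sq, ha2def, hu0, hu1, hv0, hv1]; try ring
  have hbsq : b^2 = b2 := by
    rw [hb, brAux_dist_sq, hb2def, hv0, hv1]; try ring
  have hcsq : c^2 = c2 := by
    rw [hc, brAux_dist_sq, hc2def, hu0, hu1]; try ring
  constructor
  · apply brAux_eq_of_sq
    · rw [mul_pow, mul_pow, hcsq, hbsq]
      linear_combination hfin1
    · rw [hb, hc]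
      positivity
  · apply brAux_eq_of_sq
    · rw [mul_pow, mul_pow, hasq, hcsq]
      linear_combination hfin2
    · rw [ha, hc]
      positivity
end
end
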